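/- arXiv:1611.04429 — 7 statements merged into one kernel-verified Lean document; each statement's English description precedes it below -/
import Mathlib

section
/- Let K, M be positive integers, D = KM. Let A be the D×D GFDM matrix whose (k+mK)-th column is the vector g_{k,m} with n-th entry g_{⟨n-mK⟩_D}·e^{2πi kn/K} (where g ∈ C^D is the prototype filter and ⟨·⟩_D denotes reduction mod D). Let G be the characteristic matrix of g. Then A = (W_M^H ⊗ I_K) · diag(vec(G)) · (W_M ⊗ W_K^H). -/
open Complex Matrix BigOperators Kronecker

noncomputable section

namespace GFDM

/-- Normalized p-point DFT matrix. -/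
def W (p : ℕ) : Matrix (Fin p) (Fin p) ℂ := fun m n =>
  Complex.exp (-2 * Real.pi * Complex.I * (m.val : ℂ) * (n.val : ℂ) / (p : ℂ)) / (Real.sqrt p : ℂ)

/-- Reshape a vector of length K*M into a K×M matrix, (k,m)-entry = g (k + m*K). -/
def reshape (K M : ℕ) (g : Fin (K * M) → ℂ) : Matrix (Fin K) (Fin M) ℂ := fun k m =>
  g ⟨k.val + m.val * K, by
    have hm := m.isLt
    calc k.val + m.val * K < K + m.val * K := by omega
      _ = (m.val + 1) * K := by ring
      _ ≤ M * K := Nat.mul_le_mul_right K hm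
      _ = K * M := Nat.mul_comm M K⟩

/-- Column-wise vectorization of a K×M matrix: (vec G) (k + m*K) = G k m. -/
def vec (K M : ℕ) (G : Matrix (Fin K) (Fin M) ℂ) : Fin (K * M) → ℂ := fun i =>
  G ⟨i.val % K, by
      have h := i.isLt
      rcases Nat.eq_zero_or_pos K with h0 | h0
      · subst h0; simp at h
      · exact Nat.mod_lt _ h0⟩
    ⟨i.val / K, Nat.div_lt_of_lt_mul i.isLt⟩

/-- The characteristic matrix G = √D · reshape(g,K,M) · W_M. -/
def charMatrix (K M : ℕ) (g : Fin (K * M) → ℂ) : Matrix (Fin K) (Fin M) ℂ :=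
  (Real.sqrt (K * M) : ℂ) • (reshape K M g * W M)

/-- Phase-shifted characteristic matrix: Ḡ_{k,m} = G_{k,m} e^{-2πi km/D}. -/
def phaseShift (K M : ℕ) (G : Matrix (Fin K) (Fin M) ℂ) : Matrix (Fin K) (Fin M) ℂ := fun k m =>
  G k m * Complex.exp (-2 * Real.pi * Complex.I * (k.val : ℂ) * (m.val : ℂ) / ((K * M : ℕ) : ℂ))

/-- Index identification (m,k) ↦ k + K·m between Fin M × Fin K and Fin (K*M). -/
def idx (K M : ℕ) : Fin M × Fin K ≃ Fin (K * M) :=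
  finProdFinEquiv.trans (finCongr (Nat.mul_comm M K))

/-- The GFDM matrix (W_M^H ⊗ I_K)·diag(vec G)·(W_M ⊗ W_K^H) built from a characteristic matrix G. -/
def gfdmOfChar (K M : ℕ) (G : Matrix (Fin K) (Fin M) ℂ) :
    Matrix (Fin (K * M)) (Fin (K * M)) ℂ :=
  Matrix.reindex (idx K M) (idx K M)
    (((W M)ᴴ ⊗ₖ (1 : Matrix (Fin K) (Fin K) ℂ)) *
      Matrix.diagonal (fun p : Fin M × Fin K => G p.2 p.1) *
      (W M ⊗ₖ (W K)ᴴ))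

/-- The GFDM matrix defined directly by its columns: the (k+mK)-th column has n-th entry
    g_{⟨n-mK⟩_D} e^{2πi kn/K}. -/
def gfdmMatrix (K M : ℕ) (g : Fin (K * M) → ℂ) : Matrix (Fin (K * M)) (Fin (K * M)) ℂ :=
  fun n c =>
    g ⟨(n.val + K * M - (c.val / K) * K) % (K * M), by
        have h := n.isLt
        rcases Nat.eq_zero_or_pos (K * M) with h0 | h0
        · omega
        · exact Nat.mod_lt _ h0⟩ *
      Complex.exp (2 * Real.pi * Complex.I * ((c.val % K : ℕ) : ℂ) * (n.val : ℂ) / (K : ℂ))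

/-- The permutation matrix Π with Π_{kM+m, nK+l} = δ_{kl} δ_{mn}. -/
def permPi (K M : ℕ) : Matrix (Fin (K * M)) (Fin (K * M)) ℂ := fun i j =>
  if i.val / M = j.val % K ∧ i.val % M = j.val / K then 1 else 0

/-- The index k + m·K as an element of Fin (K*M). -/
def vecIdx {K M : ℕ} (k : Fin K) (m : Fin M) : Fin (K * M) :=
  ⟨k.val + m.val * K, by
    have hm := m.isLt
    calc k.val + m.val * K < K + m.val * K := by omega
      _ = (m.val + 1) * K := by ring
      _ ≤ M * K := Nat.mul_le_mul_right K hm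
      _ = K * M := Nat.mul_comm M K⟩

/-- The index k·M + m as an element of Fin (K*M). -/
def rowIdx {K M : ℕ} (k : Fin K) (m : Fin M) : Fin (K * M) :=
  ⟨k.val * M + m.val, by
    have hk := k.isLt
    calc k.val * M + m.val < k.val * M + M := by omega
      _ = (k.val + 1) * M := by ring
      _ ≤ K * M := Nat.mul_le_mul_right M hk⟩


open Finset in
lemma sum_exp (M : ℕ) (hM : 0 < M) (t : ℤ) :
    ∑ μ : Fin M, Complex.exp (2 * Real.pi * Complex.I * t * μ / M)
      = if (M : ℤ) ∣ t then (M : ℂ) else 0 := by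
  have hMne : (M : ℂ) ≠ 0 := Nat.cast_ne_zero.2 hM.ne'
  set z : ℂ := Complex.exp (2 * Real.pi * Complex.I * t / M) with hz
  have hzpow : ∀ μ : ℕ, Complex.exp (2 * Real.pi * Complex.I * t * μ / M) = z ^ μ := by
    intro μ
    rw [hz, ← Complex.exp_nat_mul]
    ring_nf
  have hsum : (∑ μ : Fin M, Complex.exp (2 * Real.pi * Complex.I * t * μ / M))
      = ∑ μ ∈ Finset.range M, z ^ μ := by
    simp only [hzpow]
    exact Fin.sum_univ_eq_sum_range _ _
  rw [hsum]
  by_cases hd : (M : ℤ) ∣ t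
  all_goals have hd' := hd
  · obtain ⟨s, rfl⟩ := hd'
    have hz1 : z = 1 := by
      rw [hz]
      have : 2 * (Real.pi : ℂ) * Complex.I * ((M : ℤ) * s : ℤ) / M = s * (2 * Real.pi * Complex.I) := by
        push_cast
        field_simp
      rw [this, Complex.exp_int_mul_two_pi_mul_I]
    simp [hz1, if_pos hd]
  · have hz1 : z ≠ 1 := by
      intro h
      rw [hz, Complex.exp_eq_one_iff] at h
      obtain ⟨n, hn⟩ := h
      apply hd
      refine ⟨n, ?_⟩
      have hpi : (2 : ℂ) * Real.pi * Complex.I ≠ 0 := by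
        simp [Real.pi_ne_zero, Complex.I_ne_zero]
      have : (t : ℂ) = (M : ℂ) * n := by
        field_simp at hn
        have h2 : (2 : ℂ) * Real.pi * Complex.I * t = 2 * Real.pi * Complex.I * (M * n) := by
          rw [hn]
        exact mul_left_cancel₀ hpi h2
      exact_mod_cast this
    have hzM : z ^ M = 1 := by
      rw [hz, ← Complex.exp_nat_mul]
      have : (M : ℂ) * (2 * Real.pi * Complex.I * t / M) = t * (2 * Real.pi * Complex.I) := by
        field_simp
      rw [this, Complex.exp_int_mul_two_pi_mul_I]
    rw [geom_sum_eq hz1, hzM]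
    simp [hd]

lemma sqrt_mul_selfC (p : ℕ) : (Real.sqrt p : ℂ) * (Real.sqrt p : ℂ) = (p : ℂ) := by
  rw [← Complex.ofReal_mul, Real.mul_self_sqrt (Nat.cast_nonneg p)]
  norm_cast

lemma conjW (p : ℕ) (a b : Fin p) :
    (W p)ᴴ a b = Complex.exp (2 * Real.pi * Complex.I * a * b / p) / (Real.sqrt p : ℂ) := by
  rw [Matrix.conjTranspose_apply, W]
  rw [star_div₀]
  congr 1
  · rw [Complex.star_def, ← Complex.exp_conj]
    congr 1
    simp only [map_div₀, _root_.map_mul, map_neg, map_ofNat, Complex.conj_I, Complex.conj_ofReal,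
      Complex.conj_natCast]
    ring
  · rw [Complex.star_def, Complex.conj_ofReal]

theorem stmt2 (K M : ℕ) (hK : 0 < K) (hM : 0 < M) (g : Fin (K * M) → ℂ) :
    gfdmMatrix K M g = gfdmOfChar K M (charMatrix K M g) := by
  have hKM : 0 < K * M := Nat.mul_pos hK hM
  ext n c
  obtain ⟨mn, kn, rfl⟩ : ∃ (mn : Fin M) (kn : Fin K), n = idx K M (mn, kn) :=
    ⟨((idx K M).symm n).1, ((idx K M).symm n).2, by simp⟩
  obtain ⟨mc, kc, rfl⟩ : ∃ (mc : Fin M) (kc : Fin K), c = idx K M (mc, kc) :=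
    ⟨((idx K M).symm c).1, ((idx K M).symm c).2, by simp⟩
  have hidx : ∀ (m : Fin M) (k : Fin K), ((idx K M (m, k)) : ℕ) = k.val + K * m.val :=
    fun m k => rfl
  have hdiv : ∀ (m : Fin M) (k : Fin K), ((idx K M (m, k)) : ℕ) / K = m.val := by
    intro m k
    rw [hidx, Nat.add_mul_div_left _ _ hK, Nat.div_eq_of_lt k.isLt, Nat.zero_add]
  have hmod : ∀ (m : Fin M) (k : Fin K), ((idx K M (m, k)) : ℕ) % K = k.val := by
    intro m k
    rw [hidx, Nat.add_mul_mod_self_left, Nat.mod_eq_of_lt k.isLt]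
  rw [gfdmOfChar, Matrix.reindex_apply, Matrix.submatrix_apply, Equiv.symm_apply_apply,
    Equiv.symm_apply_apply, Matrix.mul_apply]
  simp only [Matrix.mul_diagonal, Matrix.kroneckerMap_apply]
  rw [Fintype.sum_prod_type]
  have hcol : ∀ x : Fin M,
      (∑ y : Fin K, (W M)ᴴ mn x * (1 : Matrix (Fin K) (Fin K) ℂ) kn y *
        charMatrix K M g y x * (W M x mc * (W K)ᴴ y kc))
      = (W M)ᴴ mn x * charMatrix K M g kn x * (W M x mc * (W K)ᴴ kn kc) := by
    intro x
    rw [Finset.sum_eq_single kn]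
    · simp [Matrix.one_apply_eq]
    · intro y _ hy
      simp [Matrix.one_apply, Ne.symm hy]
    · simp
  simp only [hcol]
  simp only [conjW, charMatrix, Matrix.smul_apply, smul_eq_mul, Matrix.mul_apply, reshape, W]
  simp only [Finset.mul_sum, Finset.sum_mul]
  rw [Finset.sum_comm]
  have hb : ∀ y : Fin M, kn.val + y.val * K < K * M := by
    intro y
    have hy := y.isLt
    calc kn.val + y.val * K < K + y.val * K := by omega
      _ = (y.val + 1) * K := by ring
      _ ≤ M * K := Nat.mul_le_mul_right K hy
      _ = K * M := Nat.mul_comm M K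
  have hMC : (M : ℂ) ≠ 0 := Nat.cast_ne_zero.2 hM.ne'
  have hKC : (K : ℂ) ≠ 0 := Nat.cast_ne_zero.2 hK.ne'
  have hsM : ((Real.sqrt M : ℝ) : ℂ) ≠ 0 := by
    exact_mod_cast Complex.ofReal_ne_zero.2
      (ne_of_gt (Real.sqrt_pos.2 (by exact_mod_cast hM)))
  have hsK : ((Real.sqrt K : ℝ) : ℂ) ≠ 0 := by
    exact_mod_cast Complex.ofReal_ne_zero.2
      (ne_of_gt (Real.sqrt_pos.2 (by exact_mod_cast hK)))
  have hsplit : ((Real.sqrt ((K : ℝ) * (M : ℝ)) : ℝ) : ℂ)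
      = ((Real.sqrt K : ℝ) : ℂ) * ((Real.sqrt M : ℝ) : ℂ) := by
    rw [← Complex.ofReal_mul, Real.sqrt_mul (Nat.cast_nonneg K)]
  set ν₀ : Fin M := ⟨(mn.val + M - mc.val) % M, Nat.mod_lt _ hM⟩ with hν₀
  have hdvd : ∀ y : Fin M,
      ((M : ℤ) ∣ ((mn.val : ℤ) - (y.val : ℤ) - (mc.val : ℤ))) ↔ y = ν₀ := by
    intro y
    have hmc : mc.val ≤ mn.val + M := le_of_lt (lt_of_lt_of_le mc.isLt (by omega))
    set s := mn.val + M - mc.val with hs_def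
    have hs : (s : ℤ) = (mn.val : ℤ) + M - mc.val := by
      rw [hs_def, Nat.cast_sub hmc]
      push_cast
      ring
    have h1 : M * (s / M) + s % M = s := Nat.div_add_mod s M
    have h1' : (M : ℤ) * ((s / M : ℕ) : ℤ) + ((s % M : ℕ) : ℤ)
        = (mn.val : ℤ) + M - mc.val := by
      rw [← hs]
      exact_mod_cast h1
    constructor
    · rintro ⟨w, hw⟩
      have hdiff : ((s % M : ℕ) : ℤ) - (y.val : ℤ)
          = (M : ℤ) * (w - ((s / M : ℕ) : ℤ) + 1) := by
        linear_combination h1' + hw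
      have hdvd2 : (M : ℤ) ∣ (((s % M : ℕ) : ℤ) - (y.val : ℤ)) := ⟨_, hdiff⟩
      have habs : |((s % M : ℕ) : ℤ) - (y.val : ℤ)| < (M : ℤ) := by
        rw [abs_lt]
        have h2 := Nat.mod_lt s hM
        have h3 := y.isLt
        omega
      have h0 := Int.eq_zero_of_abs_lt_dvd hdvd2 habs
      apply Fin.ext
      show y.val = s % M
      omega
    · rintro rfl
      refine ⟨((s / M : ℕ) : ℤ) - 1, ?_⟩
      have : (ν₀.val : ℤ) = ((s % M : ℕ) : ℤ) := by rw [hν₀]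
      rw [this]
      linear_combination -h1'
  trans (∑ y : Fin M,
      g ⟨kn.val + y.val * K, hb y⟩ *
        Complex.exp (2 * Real.pi * Complex.I * (kn.val : ℂ) * (kc.val : ℂ) / K) *
        ((M : ℂ)⁻¹ *
          ∑ x : Fin M, Complex.exp (2 * Real.pi * Complex.I *
            (((mn.val : ℤ) - (y.val : ℤ) - (mc.val : ℤ) : ℤ) : ℂ) * (x.val : ℂ) / M)))
  · simp only [sum_exp M hM]
    rw [Finset.sum_eq_single ν₀]
    · rw [if_pos ((hdvd ν₀).2 rfl)]
      rw [inv_mul_cancel₀ hMC, mul_one]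
      -- now: gfdmMatrix entry = g ⟨kn + ν₀*K⟩ * exp(2πI kn kc / K)
      rw [gfdmMatrix]
      have hidx2 : (((idx K M) (mn, kn) : ℕ) + K * M - mc.val * K) % (K * M)
          = kn.val + ν₀.val * K := by
        rw [hidx, hν₀]
        have e1 : kn.val + K * mn.val + K * M - mc.val * K
            = kn.val + K * (mn.val + M - mc.val) := by
          have h₂ : mc.val ≤ mn.val + M := le_of_lt (lt_of_lt_of_le mc.isLt (by omega))
          have h₁ : mc.val * K ≤ kn.val + K * mn.val + K * M :=
            le_trans (Nat.mul_le_mul_right K (le_of_lt mc.isLt)) (by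
              rw [Nat.mul_comm]; omega)
          zify [h₁, h₂]
          ring
        rw [e1]
        set a := mn.val + M - mc.val with ha
        conv_lhs => rw [← Nat.div_add_mod a M]
        rw [show kn.val + K * (M * (a / M) + a % M)
            = kn.val + (a % M) * K + (K * M) * (a / M) by ring]
        rw [Nat.add_mul_mod_self_left]
        apply Nat.mod_eq_of_lt
        have h3 : a % M < M := Nat.mod_lt _ hM
        calc kn.val + (a % M) * K < K + (a % M) * K := by omega
          _ = ((a % M) + 1) * K := by ring
          _ ≤ M * K := Nat.mul_le_mul_right K h3
          _ = K * M := Nat.mul_comm M K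
      congr 1
      · congr 1
        apply Fin.ext
        show ((idx K M (mn, kn) : ℕ) + K * M - ((idx K M (mc, kc) : ℕ) / K) * K) % (K * M)
            = kn.val + ν₀.val * K
        rw [hdiv]
        exact hidx2
      rw [hmod, hidx]
      have harg : 2 * (Real.pi : ℂ) * Complex.I * (kc.val : ℂ)
            * ((kn.val + K * mn.val : ℕ) : ℂ) / K
          = 2 * Real.pi * Complex.I * (kn.val : ℂ) * (kc.val : ℂ) / K
            + ((kc.val * mn.val : ℕ) : ℤ) * (2 * Real.pi * Complex.I) := by
        push_cast
        field_simp
      rw [harg, Complex.exp_add, Complex.exp_int_mul_two_pi_mul_I, mul_one]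
    · intro y _ hy
      rw [if_neg (fun h => hy ((hdvd y).1 h))]
      ring
    · intro h
      exact absurd (Finset.mem_univ ν₀) h
  · refine Finset.sum_congr rfl fun y _ => ?_
    rw [Finset.mul_sum, Finset.mul_sum]
    refine Finset.sum_congr rfl fun x _ => ?_
    rw [hsplit]
    rw [show 2 * (Real.pi : ℂ) * Complex.I *
          (((mn.val : ℤ) - (y.val : ℤ) - (mc.val : ℤ) : ℤ) : ℂ) * (x.val : ℂ) / M
        = (2 * Real.pi * Complex.I * (mn.val : ℂ) * (x.val : ℂ) / M)
          + ((-2 * Real.pi * Complex.I * (y.val : ℂ) * (x.val : ℂ) / M)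
          + (-2 * Real.pi * Complex.I * (x.val : ℂ) * (mc.val : ℂ) / M)) from by
      push_cast; field_simp; ring]
    rw [Complex.exp_add, Complex.exp_add]
    have h2 := sqrt_mul_selfC M
    field_simp
    ring_nf
    rw [sq, h2]


end GFDM
end
end

section
/- Let A be an invertible GFDM matrix with characteristic matrix G (so A = (W_M^H ⊗ I_K)·diag(vec(G))·(W_M ⊗ W_K^H) and G has no zero entries). Then A^{-H} := (A^{-1})^H is also a GFDM matrix, and its characteristic matrix H satisfies H_{k,l} = 1/(G_{k,l})^* for all k, l. -/
open Complex Matrix BigOperators Kronecker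

noncomputable section

namespace GFDM

lemma dft_sum (p : ℕ) (hp : 0 < p) (m n : Fin p) :
    ∑ j : Fin p, Complex.exp (2 * Real.pi * Complex.I * (j.val : ℂ) * ((m.val : ℂ) - (n.val : ℂ)) / (p : ℂ))
      = if m = n then (p : ℂ) else 0 := by
  by_cases h : m = n
  · subst h; simp
  · simp only [if_neg h]
    set ζ : ℂ := Complex.exp (2 * Real.pi * Complex.I * ((m.val : ℂ) - (n.val : ℂ)) / (p : ℂ)) with hζ
    have hp0 : (p : ℂ) ≠ 0 := Nat.cast_ne_zero.mpr hp.ne'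
    have hterm : ∀ j : Fin p,
        Complex.exp (2 * Real.pi * Complex.I * (j.val : ℂ) * ((m.val : ℂ) - (n.val : ℂ)) / (p : ℂ)) = ζ ^ j.val := by
      intro j
      rw [hζ, ← Complex.exp_nat_mul]
      congr 1; field_simp
    have hζp : ζ ^ p = 1 := by
      rw [hζ, ← Complex.exp_nat_mul]
      have : (p : ℂ) * (2 * Real.pi * Complex.I * ((m.val : ℂ) - (n.val : ℂ)) / (p : ℂ))
          = (m.val : ℂ) * (2 * Real.pi * Complex.I) - (n.val : ℂ) * (2 * Real.pi * Complex.I) := by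
        field_simp
      rw [this, Complex.exp_sub, Complex.exp_nat_mul_two_pi_mul_I, Complex.exp_nat_mul_two_pi_mul_I]
      norm_num
    have hζ1 : ζ ≠ 1 := by
      intro h1
      rw [hζ, Complex.exp_eq_one_iff] at h1
      obtain ⟨k, hk⟩ := h1
      have h2pi : (2 : ℂ) * Real.pi * Complex.I ≠ 0 := by
        simp [Real.pi_ne_zero, Complex.I_ne_zero]
      have h2 : (m.val : ℂ) - (n.val : ℂ) = (k : ℂ) * (p : ℂ) := by
        field_simp at hk
        apply mul_left_cancel₀ h2pi
        rw [hk]; ring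
      have h3 : (m.val : ℤ) - (n.val : ℤ) = k * p := by exact_mod_cast h2
      have hm' : (m.val : ℤ) < p := by exact_mod_cast m.isLt
      have hn' : (n.val : ℤ) < p := by exact_mod_cast n.isLt
      have hmn : m.val ≠ n.val := fun e => h (Fin.ext e)
      have hpz : (0 : ℤ) < p := by exact_mod_cast hp
      have hk0 : k = 0 := by
        by_contra hk0
        rcases lt_or_gt_of_ne hk0 with hlt | hgt
        · nlinarith
        · nlinarith
      subst hk0
      simp at h3
      omega
    have := geom_sum_mul ζ p
    have hsum : (∑ j : Fin p, ζ ^ j.val) = ∑ j ∈ Finset.range p, ζ ^ j :=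
      Fin.sum_univ_eq_sum_range _ _
    calc ∑ j : Fin p, Complex.exp (2 * Real.pi * Complex.I * (j.val : ℂ) * ((m.val : ℂ) - (n.val : ℂ)) / (p : ℂ))
        = ∑ j : Fin p, ζ ^ j.val := Finset.sum_congr rfl (fun j _ => hterm j)
      _ = ∑ j ∈ Finset.range p, ζ ^ j := hsum
      _ = 0 := by
          have hne : ζ - 1 ≠ 0 := sub_ne_zero.mpr hζ1
          have : (∑ j ∈ Finset.range p, ζ ^ j) * (ζ - 1) = 0 := by rw [this, hζp]; ring
          exact (mul_eq_zero.mp this).resolve_right hne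

lemma W_unitary (p : ℕ) (hp : 0 < p) : (W p)ᴴ * W p = 1 := by
  ext m n
  simp only [Matrix.mul_apply, Matrix.conjTranspose_apply, W]
  have hps : ((Real.sqrt p : ℂ)) * (Real.sqrt p : ℂ) = (p : ℂ) := by
    rw [← Complex.ofReal_mul, Real.mul_self_sqrt (Nat.cast_nonneg p)]; norm_cast
  have hp0 : (p : ℂ) ≠ 0 := Nat.cast_ne_zero.mpr hp.ne'
  have hterm : ∀ j : Fin p,
      star (Complex.exp (-2 * Real.pi * Complex.I * (j.val : ℂ) * (m.val : ℂ) / (p : ℂ)) / (Real.sqrt p : ℂ)) *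
        (Complex.exp (-2 * Real.pi * Complex.I * (j.val : ℂ) * (n.val : ℂ) / (p : ℂ)) / (Real.sqrt p : ℂ))
      = Complex.exp (2 * Real.pi * Complex.I * (j.val : ℂ) * ((m.val : ℂ) - (n.val : ℂ)) / (p : ℂ)) / (p : ℂ) := by
    intro j
    rw [star_div₀, Complex.star_def, ← Complex.exp_conj]
    have h1 : (starRingEnd ℂ) (-2 * Real.pi * Complex.I * (j.val : ℂ) * (m.val : ℂ) / (p : ℂ))
        = 2 * Real.pi * Complex.I * (j.val : ℂ) * (m.val : ℂ) / (p : ℂ) := by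
      simp only [map_div₀, _root_.map_mul, map_neg, map_ofNat, Complex.conj_I,
        Complex.conj_ofReal, Complex.conj_natCast]
      ring
    rw [h1, Complex.conj_ofReal, div_mul_div_comm, ← Complex.exp_add, hps]
    congr 1
    field_simp
    ring
  rw [Finset.sum_congr rfl (fun j _ => hterm j), ← Finset.sum_div, dft_sum p hp m n]
  by_cases h : m = n
  · subst h; simp only [Matrix.one_apply, if_pos rfl]
    push_cast
    exact div_self hp0
  · simp [Matrix.one_apply, h]

lemma kron_conjT {a b c d : Type*} [Fintype a] [Fintype b] [Fintype c] [Fintype d]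
    (A : Matrix a b ℂ) (B : Matrix c d ℂ) : (A ⊗ₖ B)ᴴ = Aᴴ ⊗ₖ Bᴴ := by
  ext i j
  simp [Matrix.conjTranspose_apply, Matrix.kroneckerMap_apply, star_mul', mul_comm]

theorem stmt6 (K M : ℕ) (hK : 0 < K) (hM : 0 < M) (G : Matrix (Fin K) (Fin M) ℂ)
    (h0 : ∀ (k : Fin K) (m : Fin M), G k m ≠ 0) :
    ((gfdmOfChar K M G)⁻¹)ᴴ = gfdmOfChar K M (fun k l => (star (G k l))⁻¹) := by
  have hWM := W_unitary M hM
  have hWK := W_unitary K hK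
  have hWM' : W M * (W M)ᴴ = 1 := mul_eq_one_comm.mp hWM
  set P := ((W M)ᴴ ⊗ₖ (1 : Matrix (Fin K) (Fin K) ℂ)) with hP
  set Q := (W M ⊗ₖ (W K)ᴴ) with hQ
  set D := Matrix.diagonal (fun p : Fin M × Fin K => G p.2 p.1) with hD
  set D' := Matrix.diagonal (fun p : Fin M × Fin K => (G p.2 p.1)⁻¹) with hD'
  set B0 := P * Matrix.diagonal (fun p : Fin M × Fin K => (star (G p.2 p.1))⁻¹) * Q with hB0
  have h1 : B0ᴴ = Qᴴ * (D' * Pᴴ) := by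
    rw [hB0, Matrix.conjTranspose_mul, Matrix.conjTranspose_mul,
      Matrix.diagonal_conjTranspose]
    have hst : (star fun p : Fin M × Fin K => (star (G p.2 p.1))⁻¹)
        = fun p : Fin M × Fin K => (G p.2 p.1)⁻¹ := by
      funext p; simp [star_inv₀]
    rw [hst, hD']
  have hQQ : Q * Qᴴ = 1 := by
    rw [hQ, kron_conjT, Matrix.conjTranspose_conjTranspose, ← Matrix.mul_kronecker_mul,
      hWM', hWK, Matrix.one_kronecker_one]
  have hPP : P * Pᴴ = 1 := by
    rw [hP, kron_conjT, Matrix.conjTranspose_conjTranspose, Matrix.conjTranspose_one,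
      ← Matrix.mul_kronecker_mul, hWM, Matrix.one_mul, Matrix.one_kronecker_one]
  have hDD : D * D' = 1 := by
    rw [hD, hD', Matrix.diagonal_mul_diagonal]
    rw [← Matrix.diagonal_one]
    exact congrArg Matrix.diagonal (funext fun p => mul_inv_cancel₀ (h0 p.2 p.1))
  have key : (P * D * Q) * B0ᴴ = 1 := by
    rw [h1]
    calc (P * D * Q) * (Qᴴ * (D' * Pᴴ))
        = P * (D * ((Q * Qᴴ) * (D' * Pᴴ))) := by simp only [Matrix.mul_assoc]
      _ = P * (D * (D' * Pᴴ)) := by rw [hQQ, Matrix.one_mul]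
      _ = P * ((D * D') * Pᴴ) := by simp only [Matrix.mul_assoc]
      _ = P * Pᴴ := by rw [hDD, Matrix.one_mul]
      _ = 1 := hPP
  show ((Matrix.reindex (idx K M) (idx K M) (P * D * Q))⁻¹)ᴴ
      = Matrix.reindex (idx K M) (idx K M) B0
  rw [Matrix.inv_reindex, Matrix.conjTranspose_reindex]
  congr 1
  rw [Matrix.inv_eq_right_inv key, Matrix.conjTranspose_conjTranspose]


end GFDM
end
end

section
/- Let A be an invertible GFDM matrix with characteristic matrix G having no zero entries, D = KM. Then every row of A^{-1} has squared L2-norm equal to ξ_H = (1/D)·Σ_{k,l} 1/|G_{k,l}|², which is independent of the row index. -/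
open Complex Matrix BigOperators Kronecker

noncomputable section

namespace GFDM

lemma rootSum (p : ℕ) (hp : 0 < p) (a b : Fin p) :
    ∑ j : Fin p, Complex.exp (2 * Real.pi * Complex.I * ((a.val : ℂ) - b.val) * (j : ℂ) / p)
      = if a = b then (p : ℂ) else 0 := by
  have hpC : (p : ℂ) ≠ 0 := Nat.cast_ne_zero.mpr hp.ne'
  set ζ : ℂ := Complex.exp (2 * Real.pi * Complex.I * ((a.val : ℂ) - b.val) / p) with hζ
  have hterm : ∀ j : Fin p,
      Complex.exp (2 * Real.pi * Complex.I * ((a.val : ℂ) - b.val) * (j : ℂ) / p) = ζ ^ (j : ℕ) := by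
    intro j
    rw [hζ, ← Complex.exp_nat_mul]
    ring_nf
  simp only [hterm]
  rw [Fin.sum_univ_eq_sum_range (fun i => ζ ^ i) p]
  by_cases hab : a = b
  · subst hab
    simp [hζ]
  · rw [if_neg hab]
    have hζp : ζ ^ p = 1 := by
      rw [hζ, ← Complex.exp_nat_mul]
      have : (p : ℂ) * (2 * Real.pi * Complex.I * ((a.val : ℂ) - b.val) / p)
          = ((a.val : ℤ) - (b.val : ℤ) : ℤ) * (2 * Real.pi * Complex.I) := by
        push_cast; field_simp
      rw [this, Complex.exp_int_mul_two_pi_mul_I]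
    have hζ1 : ζ ≠ 1 := by
      intro h
      rw [hζ, Complex.exp_eq_one_iff] at h
      obtain ⟨n, hn⟩ := h
      have hpi : (Real.pi : ℂ) ≠ 0 := Complex.ofReal_ne_zero.mpr Real.pi_ne_zero
      have : ((a.val : ℤ) - b.val : ℂ) = ((n * p : ℤ) : ℂ) := by
        have h2 : 2 * (Real.pi:ℂ) * Complex.I * ((a.val:ℂ) - (b.val:ℂ)) =
            2 * (Real.pi:ℂ) * Complex.I * ((n:ℂ) * (p:ℂ)) := by
          field_simp at hn
          linear_combination (2 * (Real.pi:ℂ) * Complex.I) * hn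
        have h3 := mul_left_cancel₀ (show (2*(Real.pi:ℂ)*Complex.I) ≠ 0 by
          simp [Real.pi_ne_zero, Complex.I_ne_zero]) h2
        push_cast
        linear_combination h3
      have h2 : (a.val : ℤ) - b.val = n * p := by exact_mod_cast this
      have ha := a.isLt; have hb := b.isLt
      have hn0 : n ≠ 0 := by
        rintro rfl
        simp at h2
        exact hab (Fin.ext (by omega))
      have h3 : (1 : ℤ) ≤ |n| := Int.one_le_abs (by exact_mod_cast hn0)
      have h4 : |(a.val : ℤ) - b.val| < p := by
        rw [abs_lt]; omega
      rw [h2, abs_mul, Int.abs_natCast] at h4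
      nlinarith [abs_nonneg n]
    rw [geom_sum_eq hζ1, hζp]
    simp

lemma W_mul_conjTranspose (p : ℕ) (hp : 0 < p) : W p * (W p)ᴴ = 1 :=
  mul_eq_one_comm.mp (W_unitary p hp)

lemma W_abs (p : ℕ) (m n : Fin p) : ‖W p m n‖ = (Real.sqrt p)⁻¹ := by
  simp only [W, norm_div]
  have h1 : -2 * (Real.pi:ℂ) * Complex.I * (m.val : ℂ) * (n.val : ℂ) / (p : ℂ)
      = ((-2 * Real.pi * m.val * n.val / p : ℝ) : ℂ) * Complex.I := by
    push_cast; ring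
  rw [h1, Complex.norm_exp_ofReal_mul_I, Complex.norm_real, Real.norm_eq_abs,
    _root_.abs_of_nonneg (Real.sqrt_nonneg _), one_div]

lemma kroneckerCT {m n k l : Type*} (A : Matrix m n ℂ) (B : Matrix k l ℂ) :
    (A ⊗ₖ B)ᴴ = Aᴴ ⊗ₖ Bᴴ := by
  ext i j
  simp [Matrix.conjTranspose_apply, Matrix.kroneckerMap_apply, star_mul', mul_comm]

theorem stmt7 (K M : ℕ) (hK : 0 < K) (hM : 0 < M) (G : Matrix (Fin K) (Fin M) ℂ)
    (h0 : ∀ (k : Fin K) (m : Fin M), G k m ≠ 0) :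
    ∀ n : Fin (K * M),
      ∑ j : Fin (K * M), ‖(gfdmOfChar K M G)⁻¹ n j‖ ^ 2 =
        (1 / ((K * M : ℕ) : ℝ)) *
          ∑ k : Fin K, ∑ l : Fin M, (‖G k l‖ ^ 2)⁻¹ := by
  intro n
  have hD : 0 < K * M := Nat.mul_pos hK hM
  set U1 : Matrix (Fin M × Fin K) (Fin M × Fin K) ℂ :=
    (W M)ᴴ ⊗ₖ (1 : Matrix (Fin K) (Fin K) ℂ) with hU1def
  set U2 : Matrix (Fin M × Fin K) (Fin M × Fin K) ℂ := W M ⊗ₖ (W K)ᴴ with hU2def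
  set d : Fin M × Fin K → ℂ := fun p => G p.2 p.1 with hddef
  set B0 : Matrix (Fin M × Fin K) (Fin M × Fin K) ℂ :=
    U2ᴴ * Matrix.diagonal (fun r => (d r)⁻¹) * U1ᴴ with hB0def
  have hU1H : U1ᴴ = W M ⊗ₖ (1 : Matrix (Fin K) (Fin K) ℂ) := by
    rw [hU1def, kroneckerCT, Matrix.conjTranspose_conjTranspose, Matrix.conjTranspose_one]
  have hU2H : U2ᴴ = (W M)ᴴ ⊗ₖ W K := by
    rw [hU2def, kroneckerCT, Matrix.conjTranspose_conjTranspose]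
  have hU1r : U1 * U1ᴴ = 1 := by
    rw [hU1H, hU1def, ← Matrix.mul_kronecker_mul, W_unitary M hM, Matrix.one_mul,
      Matrix.one_kronecker_one]
  have hU1l : U1ᴴ * U1 = 1 := mul_eq_one_comm.mp hU1r
  have hU2r : U2 * U2ᴴ = 1 := by
    rw [hU2H, hU2def, ← Matrix.mul_kronecker_mul, W_mul_conjTranspose M hM, W_unitary K hK,
      Matrix.one_kronecker_one]
  have hd0 : ∀ r, d r ≠ 0 := fun r => h0 r.2 r.1
  have hMB : (U1 * Matrix.diagonal d * U2) * B0 = 1 := by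
    have h1 : (U1 * Matrix.diagonal d * U2) * B0 =
        U1 * (Matrix.diagonal d * ((U2 * U2ᴴ) *
          (Matrix.diagonal (fun r => (d r)⁻¹) * U1ᴴ))) := by
      rw [hB0def]; simp only [Matrix.mul_assoc]
    rw [h1, hU2r, Matrix.one_mul, ← Matrix.mul_assoc (Matrix.diagonal d),
      Matrix.diagonal_mul_diagonal]
    have h2 : (fun i => d i * (d i)⁻¹) = fun _ => (1 : ℂ) := by
      funext r; exact mul_inv_cancel₀ (hd0 r)
    rw [h2, Matrix.diagonal_one, Matrix.one_mul, hU1r]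
  set e := idx K M with hedef
  have hAinv : (gfdmOfChar K M G)⁻¹ = Matrix.reindex e e B0 := by
    apply Matrix.inv_eq_right_inv
    rw [gfdmOfChar, Matrix.reindex_apply, Matrix.reindex_apply,
      Matrix.submatrix_mul_equiv, hMB, Matrix.submatrix_one_equiv]
  set p : Fin M × Fin K := e.symm n with hpdef
  have hrow : ∀ j, (gfdmOfChar K M G)⁻¹ n j = B0 p (e.symm j) := by
    intro j; rw [hAinv, Matrix.reindex_apply, Matrix.submatrix_apply]
  set c : Fin M × Fin K → ℝ := fun r => (Complex.normSq (d r))⁻¹ with hcdef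
  have hBB : B0 * B0ᴴ = U2ᴴ * (Matrix.diagonal (fun r => ((c r : ℝ) : ℂ)) * U2) := by
    have hB0H : B0ᴴ = U1 * (Matrix.diagonal (fun r => star ((d r)⁻¹)) * U2) := by
      rw [hB0def, Matrix.conjTranspose_mul, Matrix.conjTranspose_mul,
        Matrix.conjTranspose_conjTranspose, Matrix.conjTranspose_conjTranspose,
        Matrix.diagonal_conjTranspose, Pi.star_def]
    have h2 : (Matrix.diagonal fun r => (d r)⁻¹) *
        Matrix.diagonal (fun r => star ((d r)⁻¹)) =
        Matrix.diagonal (fun r => ((c r : ℝ) : ℂ)) := by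
      have hfun : (fun i => (d i)⁻¹ * star ((d i)⁻¹)) = fun r => ((c r : ℝ) : ℂ) := by
        funext i
        rw [Complex.star_def, Complex.mul_conj, hcdef, Complex.normSq_inv]
      rw [Matrix.diagonal_mul_diagonal, hfun]
    have h1 : (U2ᴴ * Matrix.diagonal (fun r => (d r)⁻¹)) * U1ᴴ *
        (U1 * (Matrix.diagonal (fun r => star ((d r)⁻¹)) * U2)) =
        U2ᴴ * ((Matrix.diagonal (fun r => (d r)⁻¹) * ((U1ᴴ * U1) *
          Matrix.diagonal (fun r => star ((d r)⁻¹)))) * U2) := by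
      simp only [Matrix.mul_assoc]
    rw [hB0H, hB0def, h1, hU1l, Matrix.one_mul, h2]
  have hU2abs : ∀ r q, Complex.normSq (U2 r q) = (((K * M : ℕ) : ℝ))⁻¹ := by
    intro r q
    have : U2 r q = W M r.1 q.1 * star (W K q.2 r.2) := by
      rw [hU2def]; rfl
    rw [this, Complex.normSq_mul, Complex.star_def, Complex.normSq_conj,
      ← Complex.sq_norm, ← Complex.sq_norm, W_abs, W_abs, inv_pow, inv_pow, Real.sq_sqrt (Nat.cast_nonneg M),
      Real.sq_sqrt (Nat.cast_nonneg K)]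
    push_cast
    rw [← mul_inv, mul_comm]
  have hdiag : (B0 * B0ᴴ) p p = ((∑ r : Fin M × Fin K, c r * ((K * M : ℕ) : ℝ)⁻¹ : ℝ) : ℂ) := by
    rw [hBB, Matrix.mul_apply]
    push_cast
    refine Finset.sum_congr rfl fun r _ => ?_
    rw [Matrix.diagonal_mul, Matrix.conjTranspose_apply]
    have : star (U2 r p) * (((c r : ℝ) : ℂ) * U2 r p) =
        ((c r : ℝ) : ℂ) * (U2 r p * star (U2 r p)) := by ring
    rw [this, Complex.star_def, Complex.mul_conj, hU2abs r p]
    push_cast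
    ring
  have hsum : ((∑ q : Fin M × Fin K, ‖B0 p q‖ ^ 2 : ℝ) : ℂ) = (B0 * B0ᴴ) p p := by
    rw [Matrix.mul_apply]
    push_cast
    refine Finset.sum_congr rfl fun q _ => ?_
    rw [Matrix.conjTranspose_apply, Complex.star_def, Complex.mul_conj, ← Complex.sq_norm]
    push_cast
    ring
  have hreal : ∑ q : Fin M × Fin K, ‖B0 p q‖ ^ 2 =
      ∑ r : Fin M × Fin K, c r * ((K * M : ℕ) : ℝ)⁻¹ := by
    have := hsum.trans hdiag
    exact_mod_cast this
  calc ∑ j : Fin (K * M), ‖(gfdmOfChar K M G)⁻¹ n j‖ ^ 2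
      = ∑ j : Fin (K * M), (fun q => ‖B0 p q‖ ^ 2) (e.symm j) := by
        refine Finset.sum_congr rfl fun j _ => ?_
        rw [hrow j]
    _ = ∑ q : Fin M × Fin K, ‖B0 p q‖ ^ 2 := Fintype.sum_equiv e.symm _ _ (fun j => rfl)
    _ = ∑ r : Fin M × Fin K, c r * ((K * M : ℕ) : ℝ)⁻¹ := hreal
    _ = (1 / ((K * M : ℕ) : ℝ)) * ∑ k : Fin K, ∑ l : Fin M, (‖G k l‖ ^ 2)⁻¹ := by
        rw [← Finset.sum_mul]
        rw [show ∑ r : Fin M × Fin K, c r =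
            ∑ k : Fin K, ∑ l : Fin M, (‖G k l‖ ^ 2)⁻¹ from ?_]
        · ring
        · rw [Fintype.sum_prod_type, Finset.sum_comm]
          refine Finset.sum_congr rfl fun k _ => Finset.sum_congr rfl fun l _ => ?_
          rw [hcdef]
          simp only [hddef, Complex.sq_norm]


end GFDM
end
end

section
/- Let K, M be positive integers, D = KM, let Ḡ be a K×M matrix with nonzero entries, C_0,...,C_{D-1} nonzero complex numbers, and γ > 0. For each 0 ≤ m < M define the K×K matrix F_m = u_m v_m^T + γ^{-1} ũ_m ṽ_m^T, where (u_m)_k = C_{kM+m}, (ũ_m)_k = 1/(C_{kM+m})^*, (v_m)_k = Ḡ_{k,m}, (ṽ_m)_k = 1/(Ḡ_{k,m})^*. Then there exist vectors w_m, z_m ∈ C^K with F_m = w_m z_m^T for all m if and only if for every m, either |Ḡ_{k,m}| is constant in k, or |C_{kM+m}| is constant in k. -/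
open Complex Matrix BigOperators Kronecker

noncomputable section

namespace GFDM

lemma absmul (a b : ℂ) : ‖a‖ = ‖b‖ ↔ a * star a = b * star b := by
  rw [show (star a) = (starRingEnd ℂ) a from rfl, show (star b) = (starRingEnd ℂ) b from rfl,
    Complex.mul_conj, Complex.mul_conj]
  constructor
  · intro h
    norm_cast
    rw [← Complex.sq_norm, ← Complex.sq_norm, h]
  · intro h
    have : Complex.normSq a = Complex.normSq b := by exact_mod_cast h
    rw [Complex.norm_def, Complex.norm_def, this]

lemma key (t A A' B B' : ℂ) (ht : t ≠ 0) (hA : A ≠ 0) (hA' : A' ≠ 0) (hB : B ≠ 0) (hB' : B' ≠ 0)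
    (h : (A*B + t * ((star A)⁻¹ * (star B)⁻¹)) * (A'*B' + t * ((star A')⁻¹ * (star B')⁻¹))
       = (A*B' + t * ((star A)⁻¹ * (star B')⁻¹)) * (A'*B + t * ((star A')⁻¹ * (star B)⁻¹))) :
    (A * star A - A' * star A') * (B * star B - B' * star B') = 0 := by
  have hsA : (starRingEnd ℂ) A ≠ 0 := star_ne_zero.2 hA
  have hsA' : (starRingEnd ℂ) A' ≠ 0 := star_ne_zero.2 hA'
  have hsB : (starRingEnd ℂ) B ≠ 0 := star_ne_zero.2 hB
  have hsB' : (starRingEnd ℂ) B' ≠ 0 := star_ne_zero.2 hB'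
  simp only [star_def] at h ⊢
  have h2 : t * ((A * (starRingEnd ℂ) A - A' * (starRingEnd ℂ) A') * (B * (starRingEnd ℂ) B - B' * (starRingEnd ℂ) B'))
      * ((starRingEnd ℂ) A * (starRingEnd ℂ) A' * (starRingEnd ℂ) B * (starRingEnd ℂ) B') = 0 := by
    field_simp at h
    linear_combination ((starRingEnd ℂ) A * (starRingEnd ℂ) A' * (starRingEnd ℂ) B * (starRingEnd ℂ) B') * h
  rcases mul_eq_zero.1 h2 with h3 | h3
  · rcases mul_eq_zero.1 h3 with h4 | h4
    · exact absurd h4 ht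
    · exact h4
  · exfalso
    rcases mul_eq_zero.1 h3 with h4 | h4
    · rcases mul_eq_zero.1 h4 with h5 | h5
      · rcases mul_eq_zero.1 h5 with h6 | h6
        · exact hsA h6
        · exact hsA' h6
      · exact hsB h5
    · exact hsB' h4

theorem stmt11 (K M : ℕ) (hK : 0 < K) (hM : 0 < M)
    (Gb : Matrix (Fin K) (Fin M) ℂ) (hG : ∀ (k : Fin K) (m : Fin M), Gb k m ≠ 0)
    (C : Fin (K * M) → ℂ) (hC : ∀ l, C l ≠ 0) (γ : ℝ) (hγ : 0 < γ) :
    (∀ m : Fin M, ∃ w z : Fin K → ℂ,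
        Matrix.vecMulVec (fun k => C (rowIdx k m)) (fun k => Gb k m) +
          (γ : ℂ)⁻¹ • Matrix.vecMulVec (fun k => (star (C (rowIdx k m)))⁻¹)
            (fun k => (star (Gb k m))⁻¹) = Matrix.vecMulVec w z) ↔
      (∀ m : Fin M,
        (∀ k k' : Fin K, ‖Gb k m‖ = ‖Gb k' m‖) ∨
        (∀ k k' : Fin K, ‖C (rowIdx k m)‖ = ‖C (rowIdx k' m)‖)) := by
  have hγc : (γ : ℂ) ≠ 0 := Complex.ofReal_ne_zero.2 hγ.ne'
  have ht : (γ : ℂ)⁻¹ ≠ 0 := inv_ne_zero hγc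
  constructor
  · intro h m
    obtain ⟨w, z, hwz⟩ := h m
    have hent : ∀ k l : Fin K,
        C (rowIdx k m) * Gb l m +
          (γ : ℂ)⁻¹ * ((star (C (rowIdx k m)))⁻¹ * (star (Gb l m))⁻¹) = w k * z l := by
      intro k l
      have := congrFun (congrFun hwz k) l
      simpa [Matrix.add_apply, Matrix.smul_apply, Matrix.vecMulVec_apply, smul_eq_mul]
        using this
    have minor : ∀ k k' l l' : Fin K,
        (C (rowIdx k m) * Gb l m + (γ : ℂ)⁻¹ * ((star (C (rowIdx k m)))⁻¹ * (star (Gb l m))⁻¹)) *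
          (C (rowIdx k' m) * Gb l' m + (γ : ℂ)⁻¹ * ((star (C (rowIdx k' m)))⁻¹ * (star (Gb l' m))⁻¹)) =
        (C (rowIdx k m) * Gb l' m + (γ : ℂ)⁻¹ * ((star (C (rowIdx k m)))⁻¹ * (star (Gb l' m))⁻¹)) *
          (C (rowIdx k' m) * Gb l m + (γ : ℂ)⁻¹ * ((star (C (rowIdx k' m)))⁻¹ * (star (Gb l m))⁻¹)) := by
      intro k k' l l'
      rw [hent k l, hent k' l', hent k l', hent k' l]
      ring
    by_cases hg : ∀ k k' : Fin K, ‖Gb k m‖ = ‖Gb k' m‖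
    · exact Or.inl hg
    · right
      push_neg at hg
      obtain ⟨l, l', hll⟩ := hg
      intro k k'
      have hz := key ((γ : ℂ)⁻¹) (C (rowIdx k m)) (C (rowIdx k' m)) (Gb l m) (Gb l' m)
        ht (hC _) (hC _) (hG _ _) (hG _ _) (minor k k' l l')
      rcases mul_eq_zero.1 hz with h1 | h1
      · exact (absmul _ _).2 (sub_eq_zero.1 h1)
      · exact absurd ((absmul _ _).2 (sub_eq_zero.1 h1)) hll
  · intro h m
    set k0 : Fin K := ⟨0, hK⟩
    rcases h m with hg | hc
    · set r : ℂ := Gb k0 m * star (Gb k0 m) with hr_def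
      have hr : r ≠ 0 := mul_ne_zero (hG k0 m) (star_ne_zero.2 (hG k0 m))
      have hGr : ∀ l : Fin K, star (Gb l m) = r * (Gb l m)⁻¹ := by
        intro l
        have h1 : Gb l m * star (Gb l m) = r := (absmul _ _).1 (hg l k0)
        rw [← h1]
        field_simp [hG l m]
      refine ⟨fun k => C (rowIdx k m) + (γ : ℂ)⁻¹ * r⁻¹ * (star (C (rowIdx k m)))⁻¹,
        fun l => Gb l m, ?_⟩
      ext k l
      simp only [Matrix.add_apply, Matrix.smul_apply, Matrix.vecMulVec_apply, smul_eq_mul]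
      rw [hGr l]
      have hsC : (star (C (rowIdx k m))) ≠ 0 := star_ne_zero.2 (hC _)
      field_simp
    · set s : ℂ := C (rowIdx k0 m) * star (C (rowIdx k0 m)) with hs_def
      have hs : s ≠ 0 := mul_ne_zero (hC _) (star_ne_zero.2 (hC _))
      have hCs : ∀ k : Fin K, star (C (rowIdx k m)) = s * (C (rowIdx k m))⁻¹ := by
        intro k
        have h1 : C (rowIdx k m) * star (C (rowIdx k m)) = s := (absmul _ _).1 (hc k k0)
        rw [← h1]
        field_simp [hC (rowIdx k m)]
      refine ⟨fun k => C (rowIdx k m),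
        fun l => Gb l m + (γ : ℂ)⁻¹ * s⁻¹ * (star (Gb l m))⁻¹, ?_⟩
      ext k l
      simp only [Matrix.add_apply, Matrix.smul_apply, Matrix.vecMulVec_apply, smul_eq_mul]
      rw [hCs k]
      have hsG : (star (Gb l m)) ≠ 0 := star_ne_zero.2 (hG l m)
      field_simp

end GFDM
end
end

section
/- Fix positive reals E_S, γ, ξ and positive integers K, M with D = KM. For a K×M matrix G with ‖G‖_F² = Dξ, define σ²(G) = (E_S/γ)·(1/D)·Σ_{k,l} 1/(|G_{k,l}|² + γ^{-1}). Then σ²(G) ≥ E_S/(γξ + 1), with equality if and only if |G_{k,l}| is constant (equal to sqrt(ξ)) for all k, l. -/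
open Complex Matrix BigOperators Kronecker

noncomputable section

namespace GFDM

theorem stmt14 (K M : ℕ) (hK : 0 < K) (hM : 0 < M) (ES γ ξ : ℝ)
    (hE : 0 < ES) (hγ : 0 < γ) (hξ : 0 < ξ)
    (G : Matrix (Fin K) (Fin M) ℂ)
    (hnorm : ∑ k : Fin K, ∑ l : Fin M, ‖G k l‖ ^ 2 = ((K * M : ℕ) : ℝ) * ξ) :
    ES / (γ * ξ + 1) ≤
        (ES / γ) * ((1 / ((K * M : ℕ) : ℝ)) *
          ∑ k : Fin K, ∑ l : Fin M, (‖G k l‖ ^ 2 + γ⁻¹)⁻¹) ∧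
      ((ES / γ) * ((1 / ((K * M : ℕ) : ℝ)) *
          ∑ k : Fin K, ∑ l : Fin M, (‖G k l‖ ^ 2 + γ⁻¹)⁻¹) = ES / (γ * ξ + 1) ↔
        ∀ (k : Fin K) (l : Fin M), ‖G k l‖ = Real.sqrt ξ) := by
  classical
  set D : ℝ := ((K * M : ℕ) : ℝ) with hD
  have hDpos : 0 < D := by
    have h : 0 < K * M := Nat.mul_pos hK hM
    rw [hD]; exact_mod_cast h
  set c : ℝ := ξ + γ⁻¹ with hc
  have hcpos : 0 < c := by positivity
  set a : Fin K → Fin M → ℝ := fun k l => ‖G k l‖ ^ 2 + γ⁻¹ with ha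
  have hapos : ∀ k l, 0 < a k l := by intro k l; simp only [ha]; positivity
  have hsum : (∑ k : Fin K, ∑ l : Fin M, a k l) = D * c := by
    have h1 : (∑ k : Fin K, ∑ l : Fin M, a k l)
        = (∑ k : Fin K, ∑ l : Fin M, ‖G k l‖ ^ 2)
          + (K : ℝ) * ((M : ℝ) * γ⁻¹) := by
      simp [ha, Finset.sum_add_distrib, Finset.card_univ, mul_assoc]
    rw [h1, hnorm, hD, hc]
    push_cast
    ring
  have hterm : ∀ k l, (a k l)⁻¹
      = (a k l - c) ^ 2 / (a k l * c ^ 2) + (2 * c - a k l) / c ^ 2 := by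
    intro k l
    have h1 := hapos k l
    field_simp
    ring
  set T : ℝ := ∑ k : Fin K, ∑ l : Fin M, (a k l - c) ^ 2 / (a k l * c ^ 2) with hT
  have hTnn : 0 ≤ T := by
    apply Finset.sum_nonneg; intro k _
    apply Finset.sum_nonneg; intro l _
    have := hapos k l
    positivity
  have hS : (∑ k : Fin K, ∑ l : Fin M, (a k l)⁻¹) = T + D / c := by
    have h2 : (∑ k : Fin K, ∑ l : Fin M, (2 * c - a k l) / c ^ 2) = D / c := by
      rw [show (∑ k : Fin K, ∑ l : Fin M, (2 * c - a k l) / c ^ 2)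
          = (∑ k : Fin K, ∑ l : Fin M, (2 * c - a k l)) / c ^ 2 by
        rw [Finset.sum_div]; congr 1; ext k; rw [Finset.sum_div]]
      have h3 : (∑ k : Fin K, ∑ l : Fin M, (2 * c - a k l))
          = (K : ℝ) * ((M : ℝ) * (2 * c)) - D * c := by
        simp [Finset.sum_sub_distrib, hsum, Finset.card_univ, mul_assoc]
      rw [h3]
      have hKM : (K : ℝ) * (M : ℝ) = D := by rw [hD]; push_cast; ring
      rw [show (K : ℝ) * ((M : ℝ) * (2 * c)) = D * (2 * c) by rw [← hKM]; ring]
      field_simp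
      ring
    calc (∑ k : Fin K, ∑ l : Fin M, (a k l)⁻¹)
        = ∑ k : Fin K, ∑ l : Fin M,
            ((a k l - c) ^ 2 / (a k l * c ^ 2) + (2 * c - a k l) / c ^ 2) := by
          apply Finset.sum_congr rfl; intro k _
          apply Finset.sum_congr rfl; intro l _
          exact hterm k l
      _ = T + D / c := by simp only [Finset.sum_add_distrib]; rw [h2]
  have hγc : γ * c = γ * ξ + 1 := by
    rw [hc]; field_simp; try ring
  have hbase : (ES / γ) * ((1 / D) * (D / c)) = ES / (γ * ξ + 1) := by
    rw [← hγc]; field_simp; try ring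
  have hexpr : (ES / γ) * ((1 / D) * ∑ k : Fin K, ∑ l : Fin M, (a k l)⁻¹)
      = ES / (γ * ξ + 1) + (ES / γ) * ((1 / D) * T) := by
    rw [hS, ← hbase]; ring
  have hTfac : 0 ≤ (ES / γ) * ((1 / D) * T) := by positivity
  constructor
  · rw [hexpr]; linarith
  · rw [hexpr]
    constructor
    · intro heq
      have hT0' : T = 0 := by
        by_contra hne
        have hTp : 0 < T := lt_of_le_of_ne hTnn (Ne.symm hne)
        have : 0 < (ES / γ) * ((1 / D) * T) := by positivity
        linarith
      have hT0 : (∑ k : Fin K, ∑ l : Fin M, (a k l - c) ^ 2 / (a k l * c ^ 2)) = 0 :=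
        hT.symm.trans hT0'
      intro k l
      have hrow := (Finset.sum_eq_zero_iff_of_nonneg (fun k (_ : k ∈ Finset.univ) =>
        Finset.sum_nonneg fun l _ => by
          have := hapos k l; positivity)).mp hT0 k (Finset.mem_univ k)
      have hcell := (Finset.sum_eq_zero_iff_of_nonneg (fun l (_ : l ∈ Finset.univ) => by
        have := hapos k l; positivity)).mp hrow l (Finset.mem_univ l)
      have hd : a k l * c ^ 2 ≠ 0 := by have := hapos k l; positivity
      have hac : a k l = c := by
        rcases div_eq_zero_iff.mp hcell with h | h
        · have h' : a k l - c = 0 := by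
            exact pow_eq_zero_iff (two_ne_zero) |>.mp h
          linarith
        · exact absurd h hd
      have habs2 : ‖G k l‖ ^ 2 = ξ := by
        have h : ‖G k l‖ ^ 2 + γ⁻¹ = ξ + γ⁻¹ := hac
        linarith
      calc ‖G k l‖ = Real.sqrt (‖G k l‖ ^ 2) :=
            (Real.sqrt_sq (norm_nonneg _)).symm
        _ = Real.sqrt ξ := by rw [habs2]
    · intro hconst
      have hT0 : T = 0 := by
        rw [hT]
        apply Finset.sum_eq_zero; intro k _
        apply Finset.sum_eq_zero; intro l _
        have h1 : ‖G k l‖ ^ 2 = ξ := by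
          rw [hconst k l, Real.sq_sqrt hξ.le]
        simp only [ha, hc, h1]
        simp
      rw [hT0]; ring

end GFDM
end
end

section
/- Fix positive integers K, M, D = KM, N₀ > 0, ξ > 0, and positive reals α_0,...,α_{M-1}. For a K×M matrix G with no zero entries and ‖G‖_F² = Dξ, define σ²(G) = (N₀/(K·D))·Σ_{k=0}^{K-1}Σ_{l=0}^{M-1} α_l / |G_{k,l}|². Then σ²(G) ≥ (N₀/(K·M²·ξ))·(Σ_{l=0}^{M-1} sqrt(α_l))², with equality if and only if |G_{k,l}|²/sqrt(α_l) is constant in both k and l. -/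
open Complex Matrix BigOperators Kronecker

noncomputable section

namespace GFDM

open scoped RealInnerProductSpace

set_option maxHeartbeats 1000000

theorem stmt15 (K M : ℕ) (hK : 0 < K) (hM : 0 < M) (N₀ ξ : ℝ) (hN : 0 < N₀) (hξ : 0 < ξ)
    (α : Fin M → ℝ) (hα : ∀ l, 0 < α l)
    (G : Matrix (Fin K) (Fin M) ℂ) (h0 : ∀ (k : Fin K) (l : Fin M), G k l ≠ 0)
    (hnorm : ∑ k : Fin K, ∑ l : Fin M, ‖G k l‖ ^ 2 = ((K * M : ℕ) : ℝ) * ξ) :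
    (N₀ / ((K : ℝ) * (M : ℝ) ^ 2 * ξ)) * (∑ l : Fin M, Real.sqrt (α l)) ^ 2 ≤
        (N₀ / ((K : ℝ) * ((K * M : ℕ) : ℝ))) *
          ∑ k : Fin K, ∑ l : Fin M, α l / ‖G k l‖ ^ 2 ∧
      ((N₀ / ((K : ℝ) * ((K * M : ℕ) : ℝ))) *
          ∑ k : Fin K, ∑ l : Fin M, α l / ‖G k l‖ ^ 2 =
          (N₀ / ((K : ℝ) * (M : ℝ) ^ 2 * ξ)) * (∑ l : Fin M, Real.sqrt (α l)) ^ 2 ↔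
        ∃ c : ℝ, ∀ (k : Fin K) (l : Fin M),
          ‖G k l‖ ^ 2 / Real.sqrt (α l) = c) := by
  have hK' : (0:ℝ) < K := by exact_mod_cast hK
  have hM' : (0:ℝ) < M := by exact_mod_cast hM
  set T : ℝ := ∑ l : Fin M, Real.sqrt (α l) with hT
  set S : ℝ := ∑ k : Fin K, ∑ l : Fin M, α l / ‖G k l‖ ^ 2 with hS
  have habs : ∀ k l, 0 < ‖G k l‖ := fun k l => norm_pos_iff.mpr (h0 k l)
  have hTpos : 0 < T := Finset.sum_pos (fun l _ => Real.sqrt_pos.mpr (hα l)) ⟨⟨0, hM⟩, Finset.mem_univ _⟩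
  -- the vectors
  set x : EuclideanSpace ℝ (Fin K × Fin M) :=
    WithLp.toLp 2 (fun p : Fin K × Fin M => Real.sqrt (α p.2) / ‖G p.1 p.2‖) with hx
  set y : EuclideanSpace ℝ (Fin K × Fin M) :=
    WithLp.toLp 2 (fun p : Fin K × Fin M => ‖G p.1 p.2‖) with hy
  have hinner : ⟪x, y⟫ = K * T := by
    simp only [PiLp.inner_apply, RCLike.inner_apply, conj_trivial, hx, hy]
    rw [Fintype.sum_prod_type]
    have : ∀ (k : Fin K) (l : Fin M),
        ‖G k l‖ * (Real.sqrt (α l) / ‖G k l‖) = Real.sqrt (α l) :=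
      fun k l => by rw [mul_comm]; exact div_mul_cancel₀ _ (habs k l).ne'
    simp only [this, Finset.sum_const, Finset.card_univ, Fintype.card_fin, nsmul_eq_mul, hT]
  have hxnorm : ‖x‖ ^ 2 = S := by
    rw [← real_inner_self_eq_norm_sq]
    simp only [PiLp.inner_apply, RCLike.inner_apply, conj_trivial, hx]
    rw [Fintype.sum_prod_type, hS]
    congr 1; funext k; congr 1; funext l
    rw [div_mul_div_comm, Real.mul_self_sqrt (hα l).le, ← pow_two]
  have hynorm : ‖y‖ ^ 2 = (K : ℝ) * M * ξ := by
    rw [← real_inner_self_eq_norm_sq]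
    simp only [PiLp.inner_apply, RCLike.inner_apply, conj_trivial, hy]
    rw [Fintype.sum_prod_type]
    have := hnorm
    push_cast at this
    rw [← this]
    congr 1; funext k; congr 1; funext l
    rw [pow_two]
  have hSpos : 0 < S := by
    apply Finset.sum_pos (fun k _ => Finset.sum_pos (fun l _ => ?_) ⟨⟨0, hM⟩, Finset.mem_univ _⟩)
      ⟨⟨0, hK⟩, Finset.mem_univ _⟩
    exact div_pos (hα l) (pow_pos (habs k l) 2)
  -- Cauchy-Schwarz
  have hCS : ((K:ℝ) * T) ^ 2 ≤ S * ((K:ℝ) * M * ξ) := by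
    rw [← hinner, ← hxnorm, ← hynorm]
    calc ⟪x, y⟫ ^ 2 ≤ (‖x‖ * ‖y‖) ^ 2 := by
          have h1 := real_inner_le_norm x y
          have h2 := abs_real_inner_le_norm x y
          nlinarith [abs_nonneg ⟪x, y⟫, le_abs_self ⟪x, y⟫, neg_abs_le ⟪x, y⟫]
      _ = ‖x‖ ^ 2 * ‖y‖ ^ 2 := by ring
  have hCS' : (K : ℝ) * T ^ 2 / ((M:ℝ) * ξ) ≤ S := by
    rw [div_le_iff₀ (by positivity)]
    nlinarith [hCS]
  -- rewrite the constants
  have hcast : ((K * M : ℕ) : ℝ) = (K : ℝ) * M := by push_cast; ring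
  set c0 : ℝ := N₀ / ((K:ℝ) * ((K:ℝ) * M)) with hc0
  have hc0pos : 0 < c0 := by positivity
  have hQ : N₀ / ((K : ℝ) * (M : ℝ) ^ 2 * ξ) * T ^ 2 = c0 * ((K:ℝ) * T ^ 2 / ((M:ℝ) * ξ)) := by
    rw [hc0]; field_simp
  have hP : N₀ / ((K : ℝ) * ((K * M : ℕ) : ℝ)) * S = c0 * S := by rw [hcast, hc0]
  constructor
  · rw [hQ, hP]
    exact mul_le_mul_of_nonneg_left hCS' hc0pos.le
  · rw [hQ, hP]
    constructor
    · intro h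
      have hSeq : S = (K:ℝ) * T ^ 2 / ((M:ℝ) * ξ) := mul_left_cancel₀ hc0pos.ne' h
      have hsq : ⟪x, y⟫ ^ 2 = (‖x‖ * ‖y‖) ^ 2 := by
        rw [hinner, mul_pow ‖x‖ ‖y‖, hxnorm, hynorm, hSeq]
        field_simp
      have heq : ⟪x, y⟫ = ‖x‖ * ‖y‖ := by
        have h1 : 0 ≤ ⟪x, y⟫ := by rw [hinner]; positivity
        have h2 : 0 ≤ ‖x‖ * ‖y‖ := by positivity
        exact (sq_eq_sq₀ h1 h2).mp hsq
      rw [inner_eq_norm_mul_iff_real] at heq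
      have hxpos : 0 < ‖x‖ := by
        have : ‖x‖ ^ 2 = S := hxnorm
        nlinarith [norm_nonneg x, hSpos]
      refine ⟨‖y‖ / ‖x‖, fun k l => ?_⟩
      have hkl := congrArg (fun v => v (k, l)) heq
      simp only [PiLp.smul_apply, smul_eq_mul, hx, hy, PiLp.toLp_apply] at hkl
      rw [div_eq_div_iff (Real.sqrt_pos.mpr (hα l)).ne' hxpos.ne']
      have h3 : ‖y‖ * (Real.sqrt (α l) / ‖G k l‖) = ‖x‖ * ‖G k l‖ := hkl
      rw [mul_div_assoc', div_eq_iff (habs k l).ne'] at h3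
      nlinarith [h3]
    · rintro ⟨c, hc⟩
      have hcpos : 0 < c := by
        have := hc ⟨0, hK⟩ ⟨0, hM⟩
        rw [← this]
        exact div_pos (pow_pos (habs _ _) 2) (Real.sqrt_pos.mpr (hα _))
      have ha : ∀ k l, ‖G k l‖ ^ 2 = c * Real.sqrt (α l) := fun k l => by
        have h5 := hc k l
        rw [div_eq_iff (Real.sqrt_pos.mpr (hα l)).ne'] at h5
        rw [h5]
      have hsum : (K:ℝ) * (c * T) = (K:ℝ) * ((M:ℝ) * ξ) := by
        have h4 := hnorm
        push_cast at h4
        rw [Finset.sum_congr rfl (fun k _ => Finset.sum_congr rfl (fun l _ => ha k l))] at h4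
        simp only [← Finset.mul_sum, ← hT, Finset.sum_const, Finset.card_univ, Fintype.card_fin,
          nsmul_eq_mul] at h4
        linear_combination h4
      have hcT : c * T = (M:ℝ) * ξ := mul_left_cancel₀ hK'.ne' hsum
      have hSval : S = (K:ℝ) * (T / c) := by
        rw [hS]
        have : ∀ (k : Fin K) (l : Fin M), α l / ‖G k l‖ ^ 2 = Real.sqrt (α l) / c :=
          fun k l => by
            rw [ha k l, div_eq_div_iff (mul_pos hcpos (Real.sqrt_pos.mpr (hα l))).ne' hcpos.ne']
            linear_combination (-c) * Real.mul_self_sqrt (hα l).le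
        simp only [this, ← Finset.sum_div, ← hT, Finset.sum_const, Finset.card_univ,
          Fintype.card_fin, nsmul_eq_mul]
        ring
      congr 1
      rw [hSval]
      rw [eq_div_iff (by positivity : ((M:ℝ) * ξ) ≠ 0), ← hcT]
      field_simp


end GFDM
end
end

section
/- Let K, M be even positive integers, D = KM, and let g ∈ C^D be even-symmetric: g_n = g_{D-n} for n = 1,...,D-1. Then the characteristic matrix G = sqrt(D)·reshape(g,K,M)·W_M satisfies G_{K/2, M/2} = 0; consequently, the corresponding GFDM matrix A is singular. -/
open Complex Matrix BigOperators Kronecker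

noncomputable section

namespace GFDM

lemma neg_one_pow_mod {M : ℕ} (hMe : M % 2 = 0) (x : ℕ) :
    ((-1:ℂ))^(x % M) = (-1)^x := by
  conv_rhs => rw [← Nat.mod_add_div x M]
  rw [pow_add, pow_mul]
  have : ((-1:ℂ))^M = 1 := (Nat.even_iff.mpr hMe).neg_one_pow
  rw [this, one_pow, mul_one]

lemma mod_idx (K M : ℕ) (hK : 0 < K) (hM : 0 < M) (k0 : ℕ) (hk0 : k0 < K)
    (m' mc : ℕ) (hm' : m' < M) (hmc : mc < M) :
    (k0 + m' * K + K * M - mc * K) % (K * M) = k0 + ((m' + M - mc) % M) * K := by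
  set a := m' + M - mc with ha
  have h1 : k0 + m' * K + K * M - mc * K = k0 + a * K := by
    have : a * K = m' * K + M * K - mc * K := by
      rw [ha, Nat.sub_mul, Nat.add_mul]
    have h2 : mc * K ≤ M * K := Nat.mul_le_mul_right K hmc.le
    have h3 : M * K = K * M := Nat.mul_comm M K
    omega
  rw [h1]
  have h4 : a = a % M + M * (a / M) := (Nat.mod_add_div a M).symm
  have h5 : k0 + a * K = k0 + (a % M) * K + (K * M) * (a / M) := by
    calc k0 + a * K = k0 + (a % M + M * (a / M)) * K := by rw [← h4]
      _ = k0 + (a % M) * K + (K * M) * (a / M) := by ring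
  rw [h5, Nat.add_mul_mod_self_left, Nat.mod_eq_of_lt]
  have h6 : a % M < M := Nat.mod_lt _ hM
  calc k0 + (a % M) * K < K + (a % M) * K := by omega
    _ = (a % M + 1) * K := by ring
    _ ≤ M * K := Nat.mul_le_mul_right K h6
    _ = K * M := Nat.mul_comm M K

lemma exp_half (M t : ℕ) (ht : M = 2 * t) (ht0 : 0 < t) (m : ℕ) :
    Complex.exp (-2 * Real.pi * Complex.I * (m : ℂ) * ((M / 2 : ℕ) : ℂ) / (M : ℂ))
      = (-1)^m := by
  have h2 : ((M / 2 : ℕ) : ℂ) = (t : ℂ) := by rw [ht]; norm_num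
  have hM : ((M : ℕ) : ℂ) = 2 * t := by rw [ht]; push_cast; ring
  have htne : (t : ℂ) ≠ 0 := Nat.cast_ne_zero.mpr ht0.ne'
  have harg : -2 * Real.pi * Complex.I * (m : ℂ) * ((M / 2 : ℕ) : ℂ) / (M : ℂ)
      = (m : ℂ) * (-(Real.pi * Complex.I)) := by
    rw [h2, hM]; field_simp
  rw [harg, Complex.exp_nat_mul, Complex.exp_neg, Complex.exp_pi_mul_I]
  norm_num

lemma exp_row (K : ℕ) (hK : 0 < K) (a k0 m' : ℕ) :
    Complex.exp (2 * Real.pi * Complex.I * (a : ℂ) * ((k0 + m' * K : ℕ) : ℂ) / (K : ℂ))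
      = Complex.exp (2 * Real.pi * Complex.I * (a : ℂ) * (k0 : ℂ) / (K : ℂ)) := by
  have hKne : ((K : ℕ) : ℂ) ≠ 0 := Nat.cast_ne_zero.mpr hK.ne'
  have : (2 * Real.pi * Complex.I * (a : ℂ) * ((k0 + m' * K : ℕ) : ℂ) / (K : ℂ))
      = 2 * Real.pi * Complex.I * (a : ℂ) * (k0 : ℂ) / (K : ℂ)
        + ((a * m' : ℕ) : ℤ) * (2 * Real.pi * Complex.I) := by
    push_cast; field_simp
  rw [this, Complex.exp_add, Complex.exp_int_mul_two_pi_mul_I, mul_one]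

lemma keySum (K M : ℕ) (hK : 0 < K) (hM : 0 < M) (hKe : K % 2 = 0) (hMe : M % 2 = 0)
    (g : Fin (K * M) → ℂ)
    (hsym : ∀ n : Fin (K * M),
      g n = g ⟨(K * M - n.val) % (K * M), Nat.mod_lt _ (Nat.mul_pos hK hM)⟩) :
    ∑ m : Fin M, (-1:ℂ)^(m.val) * g (vecIdx ⟨K / 2, Nat.div_lt_self hK one_lt_two⟩ m) = 0 := by
  set k0 : Fin K := ⟨K / 2, Nat.div_lt_self hK one_lt_two⟩ with hk0
  set f : Fin M → ℂ := fun m => (-1:ℂ)^(m.val) * g (vecIdx k0 m) with hf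
  have hrev : ∀ m : Fin M, f (Fin.revPerm m) = - f m := by
    intro m
    have hmlt := m.isLt
    have hrv : (Fin.revPerm m : Fin M).val = M - 1 - m.val := by
      simp [Fin.revPerm, Fin.rev]; omega
    have hg : g (vecIdx k0 (Fin.revPerm m)) = g (vecIdx k0 m) := by
      rw [hsym (vecIdx k0 m)]
      congr 1
      apply Fin.ext
      simp only [vecIdx, hrv]
      have h2 : (m.val + 1) * K ≤ M * K := Nat.mul_le_mul_right K hmlt
      have h3 : (M - 1 - m.val) * K = M * K - K - m.val * K := by
        rw [Nat.sub_mul, Nat.sub_mul, one_mul]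
      have h4 : M * K = K * M := Nat.mul_comm M K
      have h5 : (m.val + 1) * K = m.val * K + K := by ring
      have h6 : K / 2 + K / 2 = K := by omega
      have hk0v : (k0 : ℕ) = K / 2 := rfl
      rw [Nat.mod_eq_of_lt (by omega)]
      omega
    have hsign : ((-1:ℂ))^((Fin.revPerm m : Fin M).val) = -((-1:ℂ))^(m.val) := by
      rw [hrv]
      have hadd : (M - 1 - m.val) + m.val = M - 1 := by omega
      have hodd : (M - 1) % 2 = 1 := by omega
      have h1 : ((-1:ℂ))^(M - 1 - m.val) * (-1)^(m.val) = -1 := by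
        rw [← pow_add, hadd]
        exact (Nat.odd_iff.mpr hodd).neg_one_pow
      have h2 : ((-1:ℂ))^(m.val) * (-1)^(m.val) = 1 := by
        rw [← pow_add, ← two_mul, pow_mul]; norm_num
      calc ((-1:ℂ))^(M - 1 - m.val) = (-1)^(M - 1 - m.val) * ((-1)^(m.val) * (-1)^(m.val)) := by
            rw [h2, mul_one]
        _ = ((-1:ℂ)^(M - 1 - m.val) * (-1)^(m.val)) * (-1)^(m.val) := by ring
        _ = -((-1:ℂ))^(m.val) := by rw [h1]; ring
    rw [hf]
    simp only
    rw [hg, hsign]; ring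
  have hS : ∑ m : Fin M, f m = - ∑ m : Fin M, f m := by
    conv_lhs => rw [← Equiv.sum_comp Fin.revPerm f]
    rw [← Finset.sum_neg_distrib]
    exact Finset.sum_congr rfl (fun m _ => hrev m)
  have : (2:ℂ) * ∑ m : Fin M, f m = 0 := by linear_combination hS
  have h2 : (∑ m : Fin M, f m) = 0 := by
    have h20 : (2:ℂ) ≠ 0 := two_ne_zero
    exact (mul_eq_zero.mp this).resolve_left h20
  exact h2

lemma char_zero (K M : ℕ) (hK : 0 < K) (hM : 0 < M) (hKe : K % 2 = 0) (hMe : M % 2 = 0)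
    (g : Fin (K * M) → ℂ)
    (hsym : ∀ n : Fin (K * M),
      g n = g ⟨(K * M - n.val) % (K * M), Nat.mod_lt _ (Nat.mul_pos hK hM)⟩) :
    charMatrix K M g ⟨K / 2, Nat.div_lt_self hK one_lt_two⟩
        ⟨M / 2, Nat.div_lt_self hM one_lt_two⟩ = 0 := by
  obtain ⟨t, ht⟩ : ∃ t, M = 2 * t := ⟨M / 2, by omega⟩
  have ht0 : 0 < t := by omega
  set k0 : Fin K := ⟨K / 2, Nat.div_lt_self hK one_lt_two⟩ with hk0
  set m0 : Fin M := ⟨M / 2, Nat.div_lt_self hM one_lt_two⟩ with hm0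
  have hW : ∀ m : Fin M, W M m m0 = (-1:ℂ)^(m.val) / (Real.sqrt M : ℂ) := by
    intro m
    show Complex.exp (-2 * Real.pi * Complex.I * (m.val : ℂ) * ((M / 2 : ℕ) : ℂ) / (M : ℂ))
        / (Real.sqrt M : ℂ) = _
    rw [exp_half M t ht ht0]
  have hre : ∀ m : Fin M, reshape K M g k0 m = g (vecIdx k0 m) := fun m => rfl
  have hsum : ∑ m : Fin M, reshape K M g k0 m * W M m m0 = 0 := by
    have : ∑ m : Fin M, reshape K M g k0 m * W M m m0
        = (∑ m : Fin M, (-1:ℂ)^(m.val) * g (vecIdx k0 m)) / (Real.sqrt M : ℂ) := by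
      rw [Finset.sum_div]
      refine Finset.sum_congr rfl fun m _ => ?_
      rw [hW m, hre m]; ring
    rw [this, keySum K M hK hM hKe hMe g hsym, zero_div]
  show (Real.sqrt (K * M) : ℂ) • (reshape K M g * W M) k0 m0 = 0
  rw [Matrix.mul_apply, hsum, smul_zero]

lemma idx_val (K M : ℕ) (p : Fin M × Fin K) :
    ((idx K M) p).val = p.2.val + K * p.1.val := rfl

lemma not_unit (K M : ℕ) (hK : 0 < K) (hM : 0 < M) (hKe : K % 2 = 0) (hMe : M % 2 = 0)
    (g : Fin (K * M) → ℂ)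
    (hsym : ∀ n : Fin (K * M),
      g n = g ⟨(K * M - n.val) % (K * M), Nat.mod_lt _ (Nat.mul_pos hK hM)⟩) :
    ¬ IsUnit (gfdmMatrix K M g) := by
  haveI : NeZero M := ⟨hM.ne'⟩
  haveI : NeZero K := ⟨hK.ne'⟩
  set k0 : Fin K := ⟨K / 2, Nat.div_lt_self hK one_lt_two⟩ with hk0
  set A := gfdmMatrix K M g with hA
  set u : Fin (K * M) → ℂ := fun n => if n.val % K = K / 2 then (-1:ℂ)^(n.val / K) else 0
    with hu
  -- u is a left null vector of A
  have hnull : u ᵥ* A = 0 := by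
    funext c
    have hmc : c.val / K < M := by
      rw [Nat.div_lt_iff_lt_mul hK]; exact lt_of_lt_of_le c.isLt (le_of_eq (Nat.mul_comm K M))
    set mc : Fin M := ⟨c.val / K, hmc⟩ with hmc'
    have step1 : (u ᵥ* A) c = ∑ p : Fin M × Fin K, u ((idx K M) p) * A ((idx K M) p) c := by
      rw [Matrix.vecMul, dotProduct]
      exact (Equiv.sum_comp (idx K M) (fun n => u n * A n c)).symm
    rw [Pi.zero_apply, step1, Fintype.sum_prod_type]
    have hcollapse : ∀ m : Fin M,
        ∑ k : Fin K, u ((idx K M) (m, k)) * A ((idx K M) (m, k)) c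
          = (-1:ℂ)^(m.val) * A ((idx K M) (m, k0)) c := by
      intro m
      rw [Finset.sum_eq_single k0]
      · have hval : ((idx K M) (m, k0)).val = K / 2 + K * m.val := rfl
        have hmod : (K / 2 + K * m.val) % K = K / 2 := by
          rw [Nat.add_mul_mod_self_left, Nat.mod_eq_of_lt (Nat.div_lt_self hK one_lt_two)]
        have hdiv : (K / 2 + K * m.val) / K = m.val := by
          rw [Nat.add_mul_div_left _ _ hK, Nat.div_eq_of_lt (Nat.div_lt_self hK one_lt_two),
            zero_add]
        rw [hu]; simp only [hval, hmod, hdiv, if_pos rfl, if_true]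
      · intro k _ hkne
        have : ¬ (((idx K M) (m, k)).val % K = K / 2) := by
          rw [idx_val]
          simp only [Nat.add_mul_mod_self_left, Nat.mod_eq_of_lt k.isLt]
          intro hh
          exact hkne (Fin.ext hh)
        rw [hu]; simp only [this, if_neg, not_false_iff, zero_mul]
      · intro hmem; exact absurd (Finset.mem_univ k0) hmem
    rw [Finset.sum_congr rfl (fun m _ => hcollapse m)]
    -- Now evaluate A ((idx K M) (m, k0)) c
    have hAval : ∀ m : Fin M, A ((idx K M) (m, k0)) c
        = g (vecIdx k0 (m - mc)) *
          Complex.exp (2 * Real.pi * Complex.I * ((c.val % K : ℕ) : ℂ) * ((K / 2 : ℕ) : ℂ)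
            / (K : ℂ)) := by
      intro m
      show g ⟨(((idx K M) (m, k0)).val + K * M - (c.val / K) * K) % (K * M), _⟩ *
          Complex.exp (2 * Real.pi * Complex.I * ((c.val % K : ℕ) : ℂ)
            * ((((idx K M) (m, k0)).val : ℕ) : ℂ) / (K : ℂ)) = _
      have hval : ((idx K M) (m, k0)).val = K / 2 + m.val * K := by
        rw [idx_val]; ring
      congr 1
      · apply congrArg
        apply Fin.ext
        show (((idx K M) (m, k0)).val + K * M - (c.val / K) * K) % (K * M)
            = (vecIdx k0 (m - mc)).val
        have hsub : (m - mc).val = (m.val + M - c.val / K) % M := by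
          rw [Fin.sub_def]
          simp only [hmc']
          congr 1
          omega
        rw [show (vecIdx k0 (m - mc)).val = k0.val + (m - mc).val * K from rfl, hsub, hval,
          mod_idx K M hK hM (K / 2) (Nat.div_lt_self hK one_lt_two) m.val (c.val / K)
          m.isLt hmc]
      · rw [hval]
        have : ((K / 2 + m.val * K : ℕ) : ℂ) = (((K / 2 : ℕ) + m.val * K : ℕ) : ℂ) := by norm_num
        rw [show ((K / 2 + m.val * K : ℕ) : ℂ) = (((K / 2) + m.val * K : ℕ) : ℂ) from rfl,
          exp_row K hK (c.val % K) (K / 2) m.val]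
    rw [Finset.sum_congr rfl (fun m _ => by rw [hAval m])]
    -- factor out the exponential and reindex
    set E := Complex.exp (2 * Real.pi * Complex.I * ((c.val % K : ℕ) : ℂ) * ((K / 2 : ℕ) : ℂ)
      / (K : ℂ)) with hE
    have : ∑ m : Fin M, (-1:ℂ)^(m.val) * (g (vecIdx k0 (m - mc)) * E)
        = (∑ m : Fin M, (-1:ℂ)^(m.val) * g (vecIdx k0 (m - mc))) * E := by
      rw [Finset.sum_mul]; exact Finset.sum_congr rfl fun m _ => by ring
    rw [this]
    have hre : ∑ m : Fin M, (-1:ℂ)^(m.val) * g (vecIdx k0 (m - mc))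
        = (-1:ℂ)^(mc.val) * ∑ m : Fin M, (-1:ℂ)^(m.val) * g (vecIdx k0 m) := by
      rw [← Equiv.sum_comp (Equiv.addRight mc)
        (fun m : Fin M => (-1:ℂ)^(m.val) * g (vecIdx k0 (m - mc))), Finset.mul_sum]
      refine Finset.sum_congr rfl fun m _ => ?_
      have h1 : (Equiv.addRight mc m) - mc = m := by
        show m + mc - mc = m
        exact add_sub_cancel_right m mc
      have h2 : ((Equiv.addRight mc m : Fin M)).val = (m.val + mc.val) % M := by
        show ((m + mc : Fin M)).val = _
        rw [Fin.add_def]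
      rw [h1, h2, neg_one_pow_mod hMe, pow_add]
      ring
    rw [hre, keySum K M hK hM hKe hMe g hsym, mul_zero, zero_mul]
  -- conclude
  intro hunit
  obtain ⟨U, hU⟩ := hunit
  have hinv : A * (↑U⁻¹ : Matrix (Fin (K * M)) (Fin (K * M)) ℂ) = 1 := by
    rw [← hU]; exact U.mul_inv
  have : u = 0 := by
    calc u = u ᵥ* (1 : Matrix (Fin (K * M)) (Fin (K * M)) ℂ) := (Matrix.vecMul_one u).symm
      _ = u ᵥ* (A * ↑U⁻¹) := by rw [hinv]
      _ = (u ᵥ* A) ᵥ* (↑U⁻¹ : Matrix (Fin (K * M)) (Fin (K * M)) ℂ) :=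
          (Matrix.vecMul_vecMul u A _).symm
      _ = 0 := by rw [hnull, Matrix.zero_vecMul]
  have hk0D : K / 2 < K * M := lt_of_lt_of_le (Nat.div_lt_self hK one_lt_two)
    (Nat.le_mul_of_pos_right K hM)
  have hu1 : u ⟨K / 2, hk0D⟩ = 1 := by
    rw [hu]
    simp only [Nat.mod_eq_of_lt (Nat.div_lt_self hK one_lt_two), if_pos rfl, if_true,
      Nat.div_eq_of_lt (Nat.div_lt_self hK one_lt_two), pow_zero]
  rw [this] at hu1
  simp at hu1
theorem stmt17 (K M : ℕ) (hK : 0 < K) (hM : 0 < M) (hKe : K % 2 = 0) (hMe : M % 2 = 0)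
    (g : Fin (K * M) → ℂ)
    (hsym : ∀ n : Fin (K * M),
      g n = g ⟨(K * M - n.val) % (K * M), Nat.mod_lt _ (Nat.mul_pos hK hM)⟩) :
    charMatrix K M g ⟨K / 2, Nat.div_lt_self hK one_lt_two⟩
        ⟨M / 2, Nat.div_lt_self hM one_lt_two⟩ = 0 ∧
      ¬ IsUnit (gfdmMatrix K M g) := by
  exact ⟨char_zero K M hK hM hKe hMe g hsym, not_unit K M hK hM hKe hMe g hsym⟩

end GFDM
end
end
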